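/- arXiv:1509.02487 — 4 statements merged into one kernel-verified Lean document; each statement's English description precedes it below -/
import Mathlib

section
/- Let S : ℕ → Finset (Fin n) be a deterministic schedule, let i be a node, let t ≥ 1, and let n_i = |{t' : 1 ≤ t' ≤ t, i ∈ S t'}| be the number of times node i is probed up to time t. Then ∑_{t'=1}^{t} τ_i^S(t') ≥ t² / (2·(n_i + 1)). -/
set_option maxHeartbeats 1000000


/-- Waiting time of node `i` at time `t` under deterministic schedule `S`:
`t - t₀` where `t₀` is the largest time `t' < t` with `i ∈ S t'`, and `t` if
`i` is never probed before `t` (the `Finset.sup` of the empty set is `0`). -/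
def tauC (n : ℕ) (S : ℕ → Finset (Fin n)) (i : Fin n) (t : ℕ) : ℕ :=
  t - ((Finset.range t).filter (fun t' => i ∈ S t')).sup id

theorem stmt_2 (n : ℕ) (S : ℕ → Finset (Fin n)) (i : Fin n) (t : ℕ) (ht : 1 ≤ t)
    (ni : ℕ) (hni : ni = ((Finset.Icc 1 t).filter (fun t' => i ∈ S t')).card) :
    (t : ℝ) ^ 2 / (2 * ((ni : ℝ) + 1)) ≤ ∑ t' ∈ Finset.Icc 1 t, (tauC n S i t' : ℝ) := by
  classical
  set m := ni + 1 with hm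
  set t0 : ℕ → ℕ := fun t' => ((Finset.range t').filter (fun u => i ∈ S u)).sup id with ht0
  set P : Finset ℕ := insert 0 ((Finset.Icc 1 t).filter (fun t' => i ∈ S t')) with hP
  have hPcard : P.card ≤ m := by
    calc P.card ≤ ((Finset.Icc 1 t).filter (fun t' => i ∈ S t')).card + 1 :=
        Finset.card_insert_le _ _
      _ = m := by omega
  have hlt : ∀ t', 1 ≤ t' → t0 t' < t' := by
    intro t' h1
    refine Finset.sup_lt_iff (by simp only [Nat.bot_eq_zero]; omega : (⊥ : ℕ) < t') |>.2 ?_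
    intro b hb
    simp only [Finset.mem_filter, Finset.mem_range] at hb
    exact hb.1
  have hmemP : ∀ t' ∈ Finset.Icc 1 t, t0 t' ∈ P := by
    intro t' ht'
    rcases Finset.eq_empty_or_nonempty ((Finset.range t').filter (fun u => i ∈ S u)) with he | hne
    · simp [ht0, he, hP]
    · obtain ⟨b, hb, hbe⟩ := Finset.exists_mem_eq_sup _ hne id
      simp only [Finset.mem_filter, Finset.mem_range] at hb
      have : t0 t' = b := hbe
      rw [this]
      rcases Nat.eq_zero_or_pos b with h0 | h0
      · simp [hP, h0]
      · have ht'' := Finset.mem_Icc.1 ht'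
        simp only [hP, Finset.mem_insert, Finset.mem_filter, Finset.mem_Icc]
        exact Or.inr ⟨⟨h0, by omega⟩, hb.2⟩
  have htau : ∀ t', tauC n S i t' = t' - t0 t' := fun _ => rfl
  have hfiber : ∀ k, ((Finset.Icc 1 t).filter (fun t' => tauC n S i t' ≤ k)).card ≤ k * m := by
    intro k
    have hinj : ((Finset.Icc 1 t).filter (fun t' => tauC n S i t' ≤ k)).card
        ≤ ((Finset.Icc 1 k) ×ˢ P).card := by
      apply Finset.card_le_card_of_injOn (fun t' => (tauC n S i t', t0 t'))
      · intro a ha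
        have ha' := Finset.mem_filter.1 ha
        have hab := Finset.mem_Icc.1 ha'.1
        have h1 := hlt a hab.1
        simp only [Finset.mem_coe, Finset.mem_product, Finset.mem_Icc]
        refine ⟨⟨by rw [htau]; omega, ha'.2⟩, hmemP a ha'.1⟩
      · intro a ha b hb hab
        simp only [Finset.mem_coe, Finset.mem_filter, Finset.mem_Icc] at ha hb
        obtain ⟨⟨ha1, _⟩, _⟩ := ha
        obtain ⟨⟨hb1, _⟩, _⟩ := hb
        have h1 := hlt a ha1
        have h2 := hlt b hb1
        have e1 : tauC n S i a = tauC n S i b := congrArg Prod.fst hab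
        have e2 : t0 a = t0 b := congrArg Prod.snd hab
        rw [htau, htau] at e1
        omega
    calc ((Finset.Icc 1 t).filter (fun t' => tauC n S i t' ≤ k)).card
        ≤ ((Finset.Icc 1 k) ×ˢ P).card := hinj
      _ = (Finset.Icc 1 k).card * P.card := Finset.card_product _ _
      _ ≤ k * m := by
          have : (Finset.Icc 1 k).card = k := by rw [Nat.card_Icc]; omega
          rw [this]; exact Nat.mul_le_mul_left _ hPcard
  have hcount : ∀ k, t ≤ ((Finset.Icc 1 t).filter (fun t' => k + 1 ≤ tauC n S i t')).card + k * m := by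
    intro k
    have h := Finset.card_filter_add_card_filter_not
      (s := Finset.Icc 1 t) (p := fun t' => tauC n S i t' ≤ k)
    have hcongr : (Finset.Icc 1 t).filter (fun t' => ¬ tauC n S i t' ≤ k)
        = (Finset.Icc 1 t).filter (fun t' => k + 1 ≤ tauC n S i t') := by
      apply Finset.filter_congr; intro x _; simp
    rw [hcongr] at h
    have hc : (Finset.Icc 1 t).card = t := by rw [Nat.card_Icc]; omega
    rw [hc] at h
    have := hfiber k
    omega
  have hsum : ∑ t' ∈ Finset.Icc 1 t, tauC n S i t'
      = ∑ k ∈ Finset.range t, ((Finset.Icc 1 t).filter (fun t' => k + 1 ≤ tauC n S i t')).card := by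
    have h1 : ∀ t' ∈ Finset.Icc 1 t,
        tauC n S i t' = ∑ k ∈ Finset.range t, if k + 1 ≤ tauC n S i t' then 1 else 0 := by
      intro t' ht'
      have hle : tauC n S i t' ≤ t := by
        have := (Finset.mem_Icc.1 ht').2
        rw [htau]; omega
      have hfe : (Finset.range t).filter (fun k => k + 1 ≤ tauC n S i t')
          = Finset.range (tauC n S i t') := by
        ext k
        simp only [Finset.mem_filter, Finset.mem_range]
        omega
      rw [Finset.sum_boole, hfe]
      simp
    rw [Finset.sum_congr rfl h1, Finset.sum_comm]
    refine Finset.sum_congr rfl fun k _ => ?_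
    rw [Finset.sum_boole]
    simp
  -- set up q and K
  have hm1 : 1 ≤ m := by omega
  have hq := Nat.div_add_mod (t - 1) m
  have hr : (t - 1) % m < m := Nat.mod_lt _ (by omega)
  set q := (t - 1) / m with hqdef
  have hA : q * m ≤ t - 1 := Nat.div_mul_le_self _ _
  have hB : t ≤ (q + 1) * m := by
    have h1 : (q + 1) * m = q * m + m := by ring
    have h2 : m * q = q * m := Nat.mul_comm _ _
    omega
  have hKt : q + 1 ≤ t := by
    have hq1 : q ≤ q * m := Nat.le_mul_of_pos_right q (by omega)
    omega
  have hlow : ∑ k ∈ Finset.range (q + 1), (t - k * m)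
      ≤ ∑ t' ∈ Finset.Icc 1 t, tauC n S i t' := by
    rw [hsum]
    calc ∑ k ∈ Finset.range (q + 1), (t - k * m)
        ≤ ∑ k ∈ Finset.range t, (t - k * m) :=
          Finset.sum_le_sum_of_subset (Finset.range_subset_range.2 hKt)
      _ ≤ ∑ k ∈ Finset.range t, ((Finset.Icc 1 t).filter (fun t' => k + 1 ≤ tauC n S i t')).card :=
          Finset.sum_le_sum fun k _ => by have := hcount k; omega
  -- cast the lower sum to ℝ
  have hcast : ((∑ k ∈ Finset.range (q + 1), (t - k * m) : ℕ) : ℝ)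
      = (q + 1 : ℝ) * t - (m : ℝ) * ((q : ℝ) * (q + 1)) / 2 := by
    have hterm : ∀ k ∈ Finset.range (q + 1), ((t - k * m : ℕ) : ℝ) = (t : ℝ) - (k : ℝ) * m := by
      intro k hk
      have hk' : k ≤ q := by simpa [Nat.lt_succ_iff] using hk
      have hkm : k * m ≤ t := by
        have : k * m ≤ q * m := Nat.mul_le_mul_right m hk'
        omega
      push_cast [Nat.cast_sub hkm]
      ring
    rw [Nat.cast_sum, Finset.sum_congr rfl hterm, Finset.sum_sub_distrib]
    have hgauss : (∑ k ∈ Finset.range (q + 1), (k : ℝ)) = (q : ℝ) * (q + 1) / 2 := by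
      have h2 := Finset.sum_range_id_mul_two (q + 1)
      have : ((∑ k ∈ Finset.range (q + 1), k : ℕ) : ℝ) * 2 = ((q + 1 : ℕ) : ℝ) * (q : ℕ) := by
        exact_mod_cast congrArg (fun x : ℕ => (x : ℝ)) h2
      push_cast at this ⊢
      linarith
    rw [Finset.sum_const, Finset.card_range]
    rw [show (∑ k ∈ Finset.range (q + 1), (k : ℝ) * m) = (∑ k ∈ Finset.range (q + 1), (k : ℝ)) * m
      from (Finset.sum_mul _ _ _).symm]
    rw [hgauss]
    push_cast
    ring
  -- finish in ℝ
  have hfinal : ((∑ t' ∈ Finset.Icc 1 t, tauC n S i t' : ℕ) : ℝ)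
      = ∑ t' ∈ Finset.Icc 1 t, (tauC n S i t' : ℝ) := by push_cast; rfl
  rw [← hfinal]
  have hlowR : (q + 1 : ℝ) * t - (m : ℝ) * ((q : ℝ) * (q + 1)) / 2
      ≤ ((∑ t' ∈ Finset.Icc 1 t, tauC n S i t' : ℕ) : ℝ) := by
    rw [← hcast]; exact_mod_cast hlow
  have hmR : (1 : ℝ) ≤ m := by exact_mod_cast hm1
  have htR : (1 : ℝ) ≤ t := by exact_mod_cast ht
  have hAR : (q : ℝ) * m ≤ (t : ℝ) - 1 := by
    have h2 : ((q * m : ℕ) : ℝ) ≤ ((t - 1 : ℕ) : ℝ) := Nat.cast_le.2 hA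
    push_cast [Nat.cast_sub ht, hm] at h2 ⊢
    linarith
  have hBR : (t : ℝ) ≤ ((q : ℝ) + 1) * m := by exact_mod_cast hB
  have hq0 : (0 : ℝ) ≤ q := Nat.cast_nonneg q
  have hmeq : (ni : ℝ) + 1 = (m : ℝ) := by push_cast [hm]; ring
  rw [hmeq, div_le_iff₀ (by positivity)]
  have hd1 : (0 : ℝ) ≤ (m : ℝ) * ((q : ℝ) + 1) - t := by nlinarith
  have hd2 : (m : ℝ) * ((q : ℝ) + 1) - t ≤ (m : ℝ) - 1 := by nlinarith
  have key : ((m : ℝ) * ((q : ℝ) + 1) - t) ^ 2 ≤ ((m : ℝ) - 1) ^ 2 := by nlinarith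
  nlinarith [hlowR, key, sq_nonneg ((m : ℝ)), mul_nonneg hq0 (sq_nonneg (m : ℝ)), hmR]
end

section
/- Let n ≥ 1 and let r : Fin n → ℕ satisfy ∑_{i} (1/2)^{r i} ≤ 1 (as real numbers). Then there exists a : Fin n → ℕ with a i < 2^{r i} for every i, such that for all i ≠ j the arithmetic progressions {a i + k·2^{r i} : k ∈ ℕ} and {a j + k·2^{r j} : k ∈ ℕ} are disjoint. Consequently the assignment 'probe node i at the times a i + k·2^{r i}' defines a 2^{max_i r i}-cyclic deterministic 1-schedule in which node i is probed exactly every 2^{r i} steps. -/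
/-- reverse the low `r` bits of `x` -/
def rev : ℕ → ℕ → ℕ
  | 0, _ => 0
  | (r+1), x => (x % 2) * 2 ^ r + rev r (x / 2)

lemma rev_lt (r : ℕ) : ∀ x, rev r x < 2 ^ r := by
  induction r with
  | zero => intro x; simp [rev]
  | succ r ih =>
    intro x
    have h2 : x % 2 ≤ 1 := Nat.lt_succ_iff.mp (Nat.mod_lt x (by norm_num))
    have h3 := ih (x / 2)
    have : (x % 2) * 2 ^ r + rev r (x / 2) < 2 ^ (r + 1) := by
      rw [pow_succ]; nlinarith
    simpa [rev] using this

lemma rev_mod {r : ℕ} : ∀ s x, r ≤ s → rev s x % 2 ^ r = rev r (x / 2 ^ (s - r)) := by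
  intro s
  induction s with
  | zero => intro x h; interval_cases r; simp [rev]
  | succ s ih =>
    intro x h
    rcases eq_or_lt_of_le h with heq | hlt
    · subst heq
      rw [Nat.mod_eq_of_lt (rev_lt _ _)]
      simp
    · have hrs : r ≤ s := Nat.lt_succ_iff.mp hlt
      obtain ⟨w, hw⟩ : (2:ℕ) ^ r ∣ (x % 2) * 2 ^ s :=
        Dvd.dvd.mul_left (pow_dvd_pow 2 hrs) _
      have h1 : rev (s+1) x % 2 ^ r = rev s (x / 2) % 2 ^ r := by
        simp only [rev]
        rw [hw, Nat.mul_add_mod]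
      rw [h1, ih (x / 2) hrs, Nat.div_div_eq_div_mul]
      congr 2
      rw [← pow_succ']
      congr 1
      omega

lemma rev_inj (r : ℕ) : ∀ x y, x < 2 ^ r → y < 2 ^ r → rev r x = rev r y → x = y := by
  induction r with
  | zero => intro x y hx hy _; omega
  | succ r ih =>
    intro x y hx hy h
    have hlow : rev r (x / 2) = rev r (y / 2) := by
      have h1 := rev_mod (r := r) (s := r + 1) x (Nat.le_succ r)
      have h2 := rev_mod (r := r) (s := r + 1) y (Nat.le_succ r)
      simp only [Nat.add_sub_cancel_left, pow_one] at h1 h2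
      rw [← h1, ← h2, h]
    have hx2 : x / 2 < 2 ^ r := by
      have : x < 2 ^ r * 2 := by rw [← pow_succ]; exact hx
      omega
    have hy2 : y / 2 < 2 ^ r := by
      have : y < 2 ^ r * 2 := by rw [← pow_succ]; exact hy
      omega
    have hdiv : x / 2 = y / 2 := ih _ _ hx2 hy2 hlow
    have htop : x % 2 = y % 2 := by
      have := h
      simp only [rev, hlow, hdiv] at this
      have hp : (0:ℕ) < 2 ^ r := pow_pos (by norm_num) r
      have := Nat.eq_of_mul_eq_mul_right hp (by omega : (x % 2) * 2 ^ r = (y % 2) * 2 ^ r)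
      exact this
    omega



theorem stmt_3 (n : ℕ) (hn : 1 ≤ n) (r : Fin n → ℕ)
    (hr : ∑ i, ((1 : ℝ) / 2) ^ (r i) ≤ 1) :
    ∃ a : Fin n → ℕ,
      (∀ i, a i < 2 ^ (r i)) ∧
      (∀ i j : Fin n, i ≠ j →
        ∀ k l : ℕ, a i + k * 2 ^ (r i) ≠ a j + l * 2 ^ (r j)) ∧
      -- consequently, probing node `i` exactly at the times `a i + k * 2 ^ (r i)`
      -- is a deterministic 1-schedule (at most one probe per step) which probes
      -- node `i` exactly every `2 ^ (r i)` steps and which is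
      -- `2 ^ (max_i r i)`-cyclic:
      ∃ S : ℕ → Finset (Fin n),
        (∀ t, (S t).card ≤ 1) ∧
        (∀ (i : Fin n) (t : ℕ), i ∈ S t ↔ ∃ k : ℕ, t = a i + k * 2 ^ (r i)) ∧
        (∀ t : ℕ, 2 ^ (Finset.univ.sup r) ≤ t →
          S (t + 2 ^ (Finset.univ.sup r)) = S t) := by

  classical
  set R := Finset.univ.sup r with hR
  have hrR : ∀ i, r i ≤ R := fun i => Finset.le_sup (Finset.mem_univ i)
  set σ := Tuple.sort r with hσ
  have hmono : Monotone (r ∘ σ) := Tuple.monotone_sort r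
  -- the natural-number Kraft inequality
  have hsum : ∑ i, 2 ^ (R - r i) ≤ 2 ^ R := by
    have key : ∀ i : Fin n, ((2:ℝ) ^ (R - r i)) = (1/2) ^ (r i) * 2 ^ R := by
      intro i
      have h2 : (2:ℝ) ^ (R - r i) * 2 ^ (r i) = 2 ^ R := by
        rw [← pow_add]; congr 1; have := hrR i; omega
      have hp : (0:ℝ) < 2 ^ (r i) := by positivity
      field_simp
      rw [← h2, one_div, inv_pow, mul_comm ((2:ℝ) ^ r i)⁻¹, mul_inv_cancel_right₀ hp.ne']
    have : ((∑ i, 2 ^ (R - r i) : ℕ) : ℝ) ≤ ((2 ^ R : ℕ) : ℝ) := by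
      push_cast
      calc ∑ i, (2:ℝ) ^ (R - r i) = ∑ i, ((1:ℝ)/2) ^ (r i) * 2 ^ R := by
            exact Finset.sum_congr rfl fun i _ => key i
        _ = (∑ i, ((1:ℝ)/2) ^ (r i)) * 2 ^ R := by rw [Finset.sum_mul]
        _ ≤ 1 * 2 ^ R := by
            apply mul_le_mul_of_nonneg_right hr (by positivity)
        _ = 2 ^ R := by ring
    exact_mod_cast this
  -- the interval codes
  set c : Fin n → ℕ := fun p => ∑ q ∈ Finset.Iio p, 2 ^ (R - r (σ q)) with hc
  have hdvd : ∀ p, 2 ^ (R - r (σ p)) ∣ c p := by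
    intro p
    refine Finset.dvd_sum fun q hq => pow_dvd_pow 2 ?_
    have h1 : r (σ q) ≤ r (σ p) := hmono (le_of_lt (Finset.mem_Iio.mp hq))
    omega
  have hIic : ∀ p : Fin n, c p + 2 ^ (R - r (σ p)) = ∑ q ∈ Finset.Iic p, 2 ^ (R - r (σ q)) := by
    intro p
    rw [← Finset.Iio_insert, Finset.sum_insert (by simp)]
    ring
  have hcbound : ∀ p, c p + 2 ^ (R - r (σ p)) ≤ 2 ^ R := by
    intro p
    rw [hIic p]
    calc ∑ q ∈ Finset.Iic p, 2 ^ (R - r (σ q))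
        ≤ ∑ q : Fin n, 2 ^ (R - r (σ q)) :=
          Finset.sum_le_sum_of_subset (Finset.subset_univ _)
      _ = ∑ i, 2 ^ (R - r i) := Equiv.sum_comp σ (fun i => 2 ^ (R - r i))
      _ ≤ 2 ^ R := hsum
  have hcstep : ∀ p q : Fin n, p < q → c p + 2 ^ (R - r (σ p)) ≤ c q := by
    intro p q hpq
    rw [hIic p]
    exact Finset.sum_le_sum_of_subset (fun x hx => by
      simp only [Finset.mem_Iic] at hx
      simp only [Finset.mem_Iio]
      exact lt_of_le_of_lt hx hpq)
  set b : Fin n → ℕ := fun p => c p / 2 ^ (R - r (σ p)) with hb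
  have hclt : ∀ p, c p < 2 ^ R := by
    intro p
    have := hcbound p
    have hp : (0:ℕ) < 2 ^ (R - r (σ p)) := pow_pos (by norm_num) _
    omega
  have hblt : ∀ p, b p < 2 ^ (r (σ p)) := by
    intro p
    rw [hb]
    rw [Nat.div_lt_iff_lt_mul (pow_pos (by norm_num) _)]
    calc c p < 2 ^ R := hclt p
      _ = 2 ^ (r (σ p)) * 2 ^ (R - r (σ p)) := by rw [← pow_add]; congr 1; have := hrR (σ p); omega
  -- key: quotient comparison
  have hquot : ∀ p q : Fin n, p < q →
      b q / 2 ^ (r (σ q) - r (σ p)) = c q / 2 ^ (R - r (σ p)) := by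
    intro p q hpq
    rw [hb, Nat.div_div_eq_div_mul, ← pow_add]
    congr 2
    have h1 : r (σ p) ≤ r (σ q) := hmono hpq.le
    have h2 := hrR (σ q)
    omega
  have hkey : ∀ p q : Fin n, p < q → b p < b q / 2 ^ (r (σ q) - r (σ p)) := by
    intro p q hpq
    rw [hquot p q hpq]
    have h1 : (c p + 2 ^ (R - r (σ p))) / 2 ^ (R - r (σ p)) ≤ c q / 2 ^ (R - r (σ p)) :=
      Nat.div_le_div_right (hcstep p q hpq)
    rw [Nat.add_div_right _ (pow_pos (by norm_num) _)] at h1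
    calc b p < c p / 2 ^ (R - r (σ p)) + 1 := Nat.lt_succ_self _
      _ ≤ c q / 2 ^ (R - r (σ p)) := h1
  -- the offsets
  set a : Fin n → ℕ := fun i => rev (r i) (b (σ.symm i)) with ha
  have ha_lt : ∀ i, a i < 2 ^ (r i) := fun i => rev_lt _ _
  have ha_sort : ∀ p : Fin n, a (σ p) = rev (r (σ p)) (b p) := by
    intro p; rw [ha]; simp
  -- disjointness in sorted coordinates
  have aux : ∀ p q : Fin n, p < q → ∀ k l : ℕ,
      a (σ p) + k * 2 ^ (r (σ p)) ≠ a (σ q) + l * 2 ^ (r (σ q)) := by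
    intro p q hpq k l heq
    have hrpq : r (σ p) ≤ r (σ q) := hmono hpq.le
    have hd : (2:ℕ) ^ (r (σ p)) ∣ 2 ^ (r (σ q)) := pow_dvd_pow 2 hrpq
    have hmodp : (a (σ p) + k * 2 ^ (r (σ p))) % 2 ^ (r (σ p)) = a (σ p) := by
      rw [Nat.add_mul_mod_self_right, Nat.mod_eq_of_lt (ha_lt _)]
    have hmodq : (a (σ q) + l * 2 ^ (r (σ q))) % 2 ^ (r (σ q)) = a (σ q) := by
      rw [Nat.add_mul_mod_self_right, Nat.mod_eq_of_lt (ha_lt _)]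
    have h1 : a (σ p) = a (σ q) % 2 ^ (r (σ p)) := by
      rw [← hmodq, Nat.mod_mod_of_dvd _ hd, ← heq, hmodp]
    rw [ha_sort p, ha_sort q, rev_mod _ _ hrpq] at h1
    have h2 : b p = b q / 2 ^ (r (σ q) - r (σ p)) := by
      apply rev_inj (r (σ p)) _ _ (hblt p) _ h1
      · rw [hquot p q hpq, Nat.div_lt_iff_lt_mul (pow_pos (by norm_num) _)]
        calc c q < 2 ^ R := hclt q
          _ = 2 ^ (r (σ p)) * 2 ^ (R - r (σ p)) := by
              rw [← pow_add]; congr 1; have := hrR (σ p); omega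
    have := hkey p q hpq
    omega
  have hdisj : ∀ i j : Fin n, i ≠ j →
      ∀ k l : ℕ, a i + k * 2 ^ (r i) ≠ a j + l * 2 ^ (r j) := by
    intro i j hij k l
    rcases lt_trichotomy (σ.symm i) (σ.symm j) with h | h | h
    · have := aux _ _ h k l
      simpa using this
    · exact absurd (σ.symm.injective h) hij
    · have := aux _ _ h l k
      simp only [Equiv.apply_symm_apply] at this
      exact fun he => this he.symm
  refine ⟨a, ha_lt, hdisj, fun t => Finset.univ.filter (fun i => t % 2 ^ (r i) = a i), ?_, ?_, ?_⟩
  · -- at most one probe per step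
    intro t
    rw [Finset.card_le_one]
    intro i hi j hj
    by_contra hij
    simp only [Finset.mem_filter] at hi hj
    have hki : t = a i + t / 2 ^ (r i) * 2 ^ (r i) := by
      have := Nat.div_add_mod t (2 ^ (r i))
      rw [hi.2] at this
      rw [mul_comm]; omega
    have hkj : t = a j + t / 2 ^ (r j) * 2 ^ (r j) := by
      have := Nat.div_add_mod t (2 ^ (r j))
      rw [hj.2] at this
      rw [mul_comm]; omega
    exact hdisj i j hij _ _ (hki ▸ hkj)
  · -- membership spec
    intro i t
    simp only [Finset.mem_filter, Finset.mem_univ, true_and]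
    constructor
    · intro h
      refine ⟨t / 2 ^ (r i), ?_⟩
      have := Nat.div_add_mod t (2 ^ (r i))
      rw [h] at this
      rw [mul_comm]; omega
    · rintro ⟨k, rfl⟩
      rw [Nat.add_mul_mod_self_right, Nat.mod_eq_of_lt (ha_lt _)]
  · -- cyclicity
    intro t _
    ext i
    simp only [Finset.mem_filter, Finset.mem_univ, true_and]
    have : (t + 2 ^ R) % 2 ^ (r i) = t % 2 ^ (r i) := by
      have h1 : (2:ℕ) ^ R = 2 ^ (r i) * 2 ^ (R - r i) := by
        rw [← pow_add]; congr 1; have := hrR i; omega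
      rw [h1, Nat.add_mul_mod_self_left]
    rw [this]
end

section
/- Let n ≥ 1, c ≥ 1, and let π : Fin n → ℝ satisfy π i > 0 for all i. Then there exists a deterministic c-schedule S : ℕ → Finset (Fin n) with (S t).card ≤ c for all t, such that limsup_{t→∞} (1/t) · ∑_{t'=1}^{t} ∑_{i} π i · τ_i^S(t') ≤ (3 + (c-1)/c) · max(∑_{i} π i, (1/(2c)) · (∑_{i} √(π i))²). -/
open Finset

lemma window_sum (q : ℕ) : ∀ m : ℕ, ∑ v ∈ range q, (m + v) % q = ∑ v ∈ range q, v := by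
  intro m
  induction m with
  | zero => exact Finset.sum_congr rfl (fun v hv => by simp [Nat.mod_eq_of_lt (mem_range.mp hv)])
  | succ m ih =>
    rcases Nat.eq_zero_or_pos q with h | h
    · simp [h]
    obtain ⟨k, rfl⟩ : ∃ k, q = k + 1 := ⟨q - 1, by omega⟩
    rw [← ih]
    rw [Finset.sum_range_succ (fun v => (m + 1 + v) % (k + 1)) k,
        Finset.sum_range_succ' (fun v => (m + v) % (k + 1)) k]
    have h2 : (m + 1 + k) % (k + 1) = (m + 0) % (k + 1) := by
      have : m + 1 + k = m + (k + 1) := by ring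
      rw [this, Nat.add_mod_right]
      simp
    rw [h2]
    congr 1
    exact Finset.sum_congr rfl (fun v hv => by rw [show m + 1 + v = m + (v + 1) by ring])

lemma modsum (q : ℕ) (hq : 1 ≤ q) : ∀ m : ℕ, 2 * ∑ u ∈ range m, (u % q) ≤ m * (q - 1) := by
  intro m
  induction m using Nat.strong_induction_on with
  | _ m ih =>
    rcases lt_or_ge m q with h | h
    · have h0 : ∑ u ∈ range m, (u % q) = ∑ u ∈ range m, u :=
        Finset.sum_congr rfl (fun u hu => Nat.mod_eq_of_lt (lt_of_lt_of_le (mem_range.mp hu) h.le))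
      rw [h0, mul_comm, Finset.sum_range_id_mul_two]
      exact Nat.mul_le_mul_left m (by omega)
    · have hm : m = (m - q) + q := by omega
      rw [hm, Finset.sum_range_add, window_sum]
      have h1 := ih (m - q) (by omega)
      have h2 : (∑ v ∈ range q, v) * 2 = q * (q - 1) := Finset.sum_range_id_mul_two q
      calc 2 * (∑ u ∈ range (m - q), (u % q) + ∑ v ∈ range q, v)
          = 2 * ∑ u ∈ range (m - q), (u % q) + (∑ v ∈ range q, v) * 2 := by ring
        _ ≤ (m - q) * (q - 1) + q * (q - 1) := add_le_add h1 (le_of_eq h2)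
        _ = (m - q + q) * (q - 1) := (Nat.add_mul _ _ _).symm

lemma modsum' (q : ℕ) (hq : 1 ≤ q) (ρ m : ℕ) :
    2 * ∑ u ∈ range m, ((u - ρ) % q) ≤ m * (q - 1) := by
  rcases le_or_gt m ρ with h | h
  · have : ∀ u ∈ range m, (u - ρ) % q = 0 := by
      intro u hu
      have : u - ρ = 0 := by have := mem_range.mp hu; omega
      simp [this]
    rw [Finset.sum_congr rfl this]
    simp
  · have hm : m = ρ + (m - ρ) := by omega
    rw [hm, Finset.sum_range_add]
    have e1 : ∀ u ∈ range ρ, (u - ρ) % q = 0 := by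
      intro u hu
      have : u - ρ = 0 := by have := mem_range.mp hu; omega
      simp [this]
    rw [Finset.sum_congr rfl e1]
    have e2 : ∀ v ∈ range (m - ρ), (ρ + v - ρ) % q = v % q := by
      intro v _; congr 1; omega
    rw [Finset.sum_congr rfl e2, Finset.sum_const_zero]
    have := modsum q hq (m - ρ)
    have hle : (m - ρ) * (q - 1) ≤ (ρ + (m - ρ)) * (q - 1) := Nat.mul_le_mul_right _ (by omega)
    omega

lemma extract {ι : Type*} [DecidableEq ι] :
    ∀ (B : ℕ) (s : Finset ι) (w : ι → ℕ),
    (∀ i ∈ s, w i ∣ 2 ^ B) → (∀ i ∈ s, 1 ≤ w i) → 2 ^ B ≤ ∑ i ∈ s, w i →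
    ∃ A ⊆ s, ∑ i ∈ A, w i = 2 ^ B := by
  intro B
  induction B with
  | zero =>
    intro s w hdvd hpos hsum
    have hne : s.Nonempty := by
      by_contra h
      rw [Finset.not_nonempty_iff_eq_empty.mp h] at hsum; simp at hsum
    obtain ⟨i, hi⟩ := hne
    refine ⟨{i}, Finset.singleton_subset_iff.mpr hi, ?_⟩
    have h1 : w i ∣ 1 := by simpa using hdvd i hi
    simp [Nat.eq_one_of_dvd_one h1]
  | succ B IH =>
    intro s w hdvd hpos hsum
    by_cases hbig : ∃ i ∈ s, w i = 2 ^ (B + 1)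
    · obtain ⟨i, hi, hwi⟩ := hbig
      exact ⟨{i}, Finset.singleton_subset_iff.mpr hi, by simp [hwi]⟩
    · push_neg at hbig
      have hdvd' : ∀ i ∈ s, w i ∣ 2 ^ B := by
        intro i hi
        obtain ⟨k, hk, hwk⟩ := (Nat.dvd_prime_pow Nat.prime_two).mp (hdvd i hi)
        have : k ≠ B + 1 := fun h => hbig i hi (by rw [hwk, h])
        exact hwk ▸ pow_dvd_pow 2 (by omega)
      obtain ⟨A₁, hA₁s, hA₁⟩ := IH s w hdvd' hpos
        (le_trans (Nat.pow_le_pow_right (by norm_num) (Nat.le_succ B)) hsum)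
      have hsub : 2 ^ B ≤ ∑ i ∈ s \ A₁, w i := by
        have hsd : ∑ i ∈ s \ A₁, w i + ∑ i ∈ A₁, w i = ∑ i ∈ s, w i :=
          Finset.sum_sdiff hA₁s
        have h2 : 2 ^ (B + 1) = 2 ^ B + 2 ^ B := by ring
        omega
      obtain ⟨A₂, hA₂s, hA₂⟩ := IH (s \ A₁) w
        (fun i hi => hdvd' i (Finset.mem_sdiff.mp hi).1)
        (fun i hi => hpos i (Finset.mem_sdiff.mp hi).1) hsub
      refine ⟨A₁ ∪ A₂, Finset.union_subset hA₁s (hA₂s.trans Finset.sdiff_subset), ?_⟩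
      rw [Finset.sum_union (Finset.disjoint_left.mpr
        (fun i hi₁ hi₂ => (Finset.mem_sdiff.mp (hA₂s hi₂)).2 hi₁))]
      rw [hA₁, hA₂]; ring

lemma coloring {ι : Type*} [DecidableEq ι] :
    ∀ (c : ℕ) (s : Finset ι) (w : ι → ℕ) (B : ℕ),
    (∀ i ∈ s, w i ∣ 2 ^ B) → (∀ i ∈ s, 1 ≤ w i) → ∑ i ∈ s, w i ≤ c * 2 ^ B →
    ∃ f : ι → ℕ, (∀ i ∈ s, f i < c) ∧
      ∀ m, ∑ i ∈ s.filter (fun i => f i = m), w i ≤ 2 ^ B := by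
  intro c
  induction c with
  | zero =>
    intro s w B hdvd hpos hsum
    have hs : s = ∅ := by
      by_contra h
      obtain ⟨i, hi⟩ := Finset.nonempty_iff_ne_empty.mpr h
      have : 1 ≤ ∑ i ∈ s, w i := le_trans (hpos i hi) (Finset.single_le_sum (fun j _ => Nat.zero_le _) hi)
      omega
    exact ⟨fun _ => 0, by simp [hs], by simp [hs]⟩
  | succ c IH =>
    intro s w B hdvd hpos hsum
    by_cases hsmall : ∑ i ∈ s, w i ≤ 2 ^ B
    · refine ⟨fun _ => 0, fun i _ => Nat.succ_pos c, fun m => ?_⟩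
      rcases eq_or_ne m 0 with rfl | hm
      · simpa using hsmall
      · simp [Finset.filter_eq_empty_iff.mpr (fun _ _ => (Ne.symm hm)), ]
    · push_neg at hsmall
      obtain ⟨A, hAs, hA⟩ := extract B s w hdvd hpos hsmall.le
      have hsd : ∑ i ∈ s \ A, w i + ∑ i ∈ A, w i = ∑ i ∈ s, w i := Finset.sum_sdiff hAs
      obtain ⟨g, hg1, hg2⟩ := IH (s \ A) w B
        (fun i hi => hdvd i (Finset.mem_sdiff.mp hi).1)
        (fun i hi => hpos i (Finset.mem_sdiff.mp hi).1)
        (by have : (c + 1) * 2 ^ B = c * 2 ^ B + 2 ^ B := by ring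
            omega)
      refine ⟨fun i => if i ∈ A then 0 else g i + 1, fun i hi => ?_, fun m => ?_⟩
      · by_cases h : i ∈ A
        · simp [h]
        · simp only [h, if_false]
          exact Nat.succ_lt_succ (hg1 i (Finset.mem_sdiff.mpr ⟨hi, h⟩))
      · rcases m with _ | m'
        · have : s.filter (fun i => (if i ∈ A then 0 else g i + 1) = 0) = A := by
            ext i
            simp only [Finset.mem_filter]
            constructor
            · rintro ⟨hi, h⟩
              by_contra hA'
              simp [hA'] at h
            · intro hi; exact ⟨hAs hi, by simp [hi]⟩
          rw [this, hA]
        · have : s.filter (fun i => (if i ∈ A then 0 else g i + 1) = m' + 1)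
              = (s \ A).filter (fun i => g i = m') := by
            ext i
            simp only [Finset.mem_filter, Finset.mem_sdiff]
            constructor
            · rintro ⟨hi, h⟩
              by_cases hA' : i ∈ A
              · simp [hA'] at h
              · simp only [hA', if_false, Nat.succ_inj] at h
                exact ⟨⟨hi, hA'⟩, h⟩
            · rintro ⟨⟨hi, hA'⟩, h⟩
              exact ⟨hi, by simp [hA', h]⟩
          rw [this]
          exact hg2 m'

lemma residues {ι : Type*} [DecidableEq ι] :
    ∀ (B : ℕ) (s : Finset ι) (a : ι → ℕ),
    (∀ i ∈ s, a i ≤ B) → ∑ i ∈ s, 2 ^ (B - a i) ≤ 2 ^ B →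
    ∃ r : ι → ℕ, (∀ i ∈ s, r i < 2 ^ a i) ∧
      ∀ i ∈ s, ∀ j ∈ s, i ≠ j → ∀ t : ℕ,
        t % 2 ^ a i = r i → t % 2 ^ a j = r j → False := by
  intro B
  induction B with
  | zero =>
    intro s a ha hsum
    have hcard : s.card ≤ 1 := by
      by_contra h
      have hc2 : 1 < s.card := by omega
      obtain ⟨i, hi, j, hj, hij⟩ := Finset.one_lt_card.mp hc2
      have : ({i, j} : Finset ι) ⊆ s := by
        intro x hx; rcases Finset.mem_insert.mp hx with rfl | hx
        · exact hi
        · exact (Finset.mem_singleton.mp hx) ▸ hj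
      have h2 : ∑ x ∈ ({i, j} : Finset ι), 2 ^ (0 - a x) ≤ ∑ x ∈ s, 2 ^ (0 - a x) :=
        Finset.sum_le_sum_of_subset this
      rw [Finset.sum_pair hij] at h2
      have e1 : (0:ℕ) - a i = 0 := by omega
      have e2 : (0:ℕ) - a j = 0 := by omega
      rw [e1, e2] at h2
      simp at h2 hsum
      omega
    refine ⟨fun _ => 0, fun i hi => Nat.pow_pos (by norm_num), ?_⟩
    intro i hi j hj hij t _ _
    exact hij (Finset.card_le_one.mp hcard i hi j hj)
  | succ B IH =>
    intro s a ha hsum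
    by_cases hcard : s.card ≤ 1
    · refine ⟨fun _ => 0, fun i hi => Nat.pow_pos (by norm_num), ?_⟩
      intro i hi j hj hij t _ _
      exact hij (Finset.card_le_one.mp hcard i hi j hj)
    · push_neg at hcard
      have hpos : ∀ i ∈ s, 1 ≤ a i := by
        intro i hi
        by_contra h
        have hai : a i = 0 := by omega
        obtain ⟨j, hj, hij⟩ : ∃ j ∈ s, j ≠ i := by
          obtain ⟨x, hx, y, hy, hxy⟩ := Finset.one_lt_card.mp hcard
          rcases eq_or_ne x i with rfl | h'
          · exact ⟨y, hy, fun h => hxy h.symm⟩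
          · exact ⟨x, hx, h'⟩
        have hsub : ({i, j} : Finset ι) ⊆ s := by
          intro x hx; rcases Finset.mem_insert.mp hx with rfl | hx
          · exact hi
          · exact (Finset.mem_singleton.mp hx) ▸ hj
        have h2 : ∑ x ∈ ({i, j} : Finset ι), 2 ^ (B + 1 - a x) ≤ ∑ x ∈ s, 2 ^ (B + 1 - a x) :=
          Finset.sum_le_sum_of_subset hsub
        rw [Finset.sum_pair (Ne.symm hij), hai] at h2
        have h3 : 1 ≤ 2 ^ (B + 1 - a j) := Nat.pow_pos (by norm_num)
        simp only [Nat.sub_zero] at h2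
        omega
      -- split s into two halves
      have key : ∃ A ⊆ s, ∑ i ∈ A, 2 ^ (B + 1 - a i) ≤ 2 ^ B ∧
          ∑ i ∈ s \ A, 2 ^ (B + 1 - a i) ≤ 2 ^ B := by
        by_cases hsmall : ∑ i ∈ s, 2 ^ (B + 1 - a i) ≤ 2 ^ B
        · exact ⟨s, le_refl s, hsmall, by simp⟩
        · push_neg at hsmall
          obtain ⟨A, hAs, hA⟩ := extract B s (fun i => 2 ^ (B + 1 - a i))
            (fun i hi => pow_dvd_pow 2 (by have := hpos i hi; have := ha i hi; omega))
            (fun i hi => Nat.pow_pos (by norm_num)) hsmall.le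
          have hsd : ∑ i ∈ s \ A, 2 ^ (B + 1 - a i) + ∑ i ∈ A, 2 ^ (B + 1 - a i)
              = ∑ i ∈ s, 2 ^ (B + 1 - a i) := Finset.sum_sdiff hAs
          have h2 : (2:ℕ) ^ (B + 1) = 2 ^ B + 2 ^ B := by ring
          exact ⟨A, hAs, hA.le, by omega⟩
      obtain ⟨A, hAs, hA1, hA2⟩ := key
      have hEe : ∀ (u : Finset ι), u ⊆ s → ∑ i ∈ u, 2 ^ (B + 1 - a i) = ∑ i ∈ u, 2 ^ (B - (a i - 1)) := by
        intro u hu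
        refine Finset.sum_congr rfl (fun i hi => ?_)
        have := hpos i (hu hi); have := ha i (hu hi)
        congr 1; omega
      obtain ⟨r₁, hr₁, hd₁⟩ := IH A (fun i => a i - 1)
        (fun i hi => by show a i - 1 ≤ B; have := ha i (hAs hi); omega)
        (by rw [← hEe A hAs]; exact hA1)
      obtain ⟨r₂, hr₂, hd₂⟩ := IH (s \ A) (fun i => a i - 1)
        (fun i hi => by show a i - 1 ≤ B; have := ha i ((Finset.sdiff_subset) hi); omega)
        (by rw [← hEe (s \ A) Finset.sdiff_subset]; exact hA2)
      refine ⟨fun i => if i ∈ A then 2 * r₁ i else 2 * r₂ i + 1, fun i hi => ?_, ?_⟩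
      · have h1 : 1 ≤ a i := hpos i hi
        have hp : (2:ℕ) ^ a i = 2 * 2 ^ (a i - 1) := by
          rw [← pow_succ']
          congr 1; omega
        by_cases h : i ∈ A
        · simp only [h, if_true, hp]
          have := hr₁ i h
          omega
        · simp only [h, if_false, hp]
          have := hr₂ i (Finset.mem_sdiff.mpr ⟨hi, h⟩)
          omega
      · intro i hi j hj hij t hti htj
        have hpi : (2:ℕ) ^ a i = 2 * 2 ^ (a i - 1) := by
          rw [← pow_succ']; congr 1; have := hpos i hi; omega
        have hpj : (2:ℕ) ^ a j = 2 * 2 ^ (a j - 1) := by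
          rw [← pow_succ']; congr 1; have := hpos j hj; omega
        -- halved residues
        have keyi : t / 2 % 2 ^ (a i - 1) = (t % 2 ^ a i) / 2 := by
          rw [hpi, Nat.mod_mul_right_div_self]
        have keyj : t / 2 % 2 ^ (a j - 1) = (t % 2 ^ a j) / 2 := by
          rw [hpj, Nat.mod_mul_right_div_self]
        have pari : t % 2 = (t % 2 ^ a i) % 2 := (Nat.mod_mod_of_dvd t (by rw [hpi]; exact Dvd.intro _ rfl)).symm
        have parj : t % 2 = (t % 2 ^ a j) % 2 := (Nat.mod_mod_of_dvd t (by rw [hpj]; exact Dvd.intro _ rfl)).symm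
        by_cases hiA : i ∈ A <;> by_cases hjA : j ∈ A
        · simp only [hiA, if_true] at hti
          simp only [hjA, if_true] at htj
          refine hd₁ i hiA j hjA hij (t / 2) ?_ ?_
          · rw [keyi, hti]; omega
          · rw [keyj, htj]; omega
        · rw [hti] at pari; rw [htj] at parj
          simp only [hiA, if_true] at pari
          simp only [hjA, if_false] at parj
          omega
        · rw [hti] at pari; rw [htj] at parj
          simp only [hiA, if_false] at pari
          simp only [hjA, if_true] at parj
          omega
        · simp only [hiA, if_false] at hti
          simp only [hjA, if_false] at htj
          refine hd₂ i (Finset.mem_sdiff.mpr ⟨hi, hiA⟩) j (Finset.mem_sdiff.mpr ⟨hj, hjA⟩) hij (t / 2) ?_ ?_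
          · rw [keyi, hti]; omega
          · rw [keyj, htj]; omega

theorem stmt_6 (n c : ℕ) (hn : 1 ≤ n) (hc : 1 ≤ c) (π : Fin n → ℝ)
    (hπ : ∀ i, 0 < π i) :
    ∃ S : ℕ → Finset (Fin n),
      (∀ t, (S t).card ≤ c) ∧
      Filter.limsup (fun t : ℕ =>
          (1 / (t : ℝ)) * ∑ t' ∈ Finset.Icc 1 t, ∑ i, π i * (tauC n S i t' : ℝ))
          Filter.atTop ≤
        (3 + ((c : ℝ) - 1) / c) *
          max (∑ i, π i) ((1 / (2 * (c : ℝ))) * (∑ i, Real.sqrt (π i)) ^ 2) := by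
  classical
  have hcR : (0:ℝ) < c := by exact_mod_cast hc
  have hn0 : 0 < n := hn
  have hne : (Finset.univ : Finset (Fin n)).Nonempty := ⟨⟨0, hn0⟩, mem_univ _⟩
  set W : ℝ := ∑ i, Real.sqrt (π i) with hW
  have hWpos : 0 < W := Finset.sum_pos (fun i _ => Real.sqrt_pos.mpr (hπ i)) hne
  set p : Fin n → ℝ := fun i => W / (c * Real.sqrt (π i)) with hpdef
  have hppos : ∀ i, 0 < p i := fun i =>
    div_pos hWpos (mul_pos hcR (Real.sqrt_pos.mpr (hπ i)))
  set m : Fin n → ℕ := fun i => ⌈p i⌉₊ with hmdef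
  have hm1 : ∀ i, 1 ≤ m i := fun i => Nat.one_le_ceil_iff.mpr (hppos i)
  set a : Fin n → ℕ := fun i => Nat.clog 2 (m i) with hadef
  set q : Fin n → ℕ := fun i => 2 ^ a i with hqdef
  have hq1 : ∀ i, 1 ≤ q i := fun i => Nat.one_le_two_pow
  have hmq : ∀ i, m i ≤ q i := fun i => Nat.le_pow_clog one_lt_two _
  have hq2m : ∀ i, q i + 1 ≤ 2 * m i := by
    intro i
    rcases eq_or_lt_of_le (hm1 i) with h | h
    · have ha0 : a i = 0 := by rw [hadef]; simp [← h]
      have : q i = 1 := by rw [hqdef]; simp [ha0]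
      omega
    · have h2 : 1 ≤ a i := Nat.clog_pos one_lt_two h
      have h1 : 2 ^ (a i - 1) < m i := by
        have := Nat.pow_pred_clog_lt_self one_lt_two h
        simpa [hadef, Nat.pred_eq_sub_one] using this
      have h3 : q i = 2 * 2 ^ (a i - 1) := by
        show 2 ^ a i = _
        rw [← pow_succ']
        congr 1; omega
      omega
  set B := Finset.univ.sup a with hBdef
  have haB : ∀ i : Fin n, a i ≤ B := fun i => Finset.le_sup (mem_univ i)
  -- rate bound (over ℝ then ℕ)
  have hpow : ∀ i : Fin n, (2:ℕ) ^ (B - a i) * 2 ^ a i = 2 ^ B :=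
    fun i => pow_sub_mul_pow 2 (haB i)
  have hrate : ∑ i : Fin n, 2 ^ (B - a i) ≤ c * 2 ^ B := by
    have hcast : ∀ i : Fin n, ((2:ℝ) ^ (B - a i)) = 2 ^ B * (1 / (q i : ℝ)) := by
      intro i
      have hq0 : ((q i : ℕ) : ℝ) ≠ 0 := ne_of_gt (by exact_mod_cast hq1 i)
      rw [mul_one_div, eq_div_iff hq0]
      exact_mod_cast hpow i
    have hqp : ∀ i : Fin n, (1:ℝ) / q i ≤ 1 / p i := by
      intro i
      apply one_div_le_one_div_of_le (hppos i)
      calc p i ≤ (m i : ℝ) := Nat.le_ceil _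
        _ ≤ (q i : ℝ) := by exact_mod_cast hmq i
    have hsum1p : ∑ i, (1:ℝ) / p i = c := by
      have : ∀ i, (1:ℝ) / p i = (c / W) * Real.sqrt (π i) := by
        intro i
        rw [hpdef]
        have h1 : Real.sqrt (π i) ≠ 0 := ne_of_gt (Real.sqrt_pos.mpr (hπ i))
        field_simp
      rw [Finset.sum_congr rfl (fun i _ => this i), ← Finset.mul_sum, ← hW]
      field_simp
    have : ((∑ i : Fin n, 2 ^ (B - a i) : ℕ) : ℝ) ≤ ((c * 2 ^ B : ℕ) : ℝ) := by
      push_cast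
      rw [Finset.sum_congr rfl (fun i _ => hcast i), ← Finset.mul_sum]
      calc (2:ℝ) ^ B * ∑ i, 1 / (q i : ℝ)
          ≤ 2 ^ B * ∑ i, 1 / p i :=
            mul_le_mul_of_nonneg_left (Finset.sum_le_sum (fun i _ => hqp i)) (by positivity)
        _ = c * 2 ^ B := by rw [hsum1p]; ring
    exact_mod_cast this
  -- coloring
  obtain ⟨f, hf1, hf2⟩ := coloring c Finset.univ (fun i : Fin n => 2 ^ (B - a i)) B
    (fun i _ => pow_dvd_pow 2 (by omega))
    (fun i _ => Nat.one_le_two_pow)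
    (by simpa using hrate)
  -- residues per color
  have hres : ∀ mm : ℕ, ∃ r : Fin n → ℕ,
      (∀ i ∈ Finset.univ.filter (fun i => f i = mm), r i < 2 ^ a i) ∧
      ∀ i ∈ Finset.univ.filter (fun i => f i = mm),
        ∀ j ∈ Finset.univ.filter (fun i => f i = mm), i ≠ j → ∀ t : ℕ,
        t % 2 ^ a i = r i → t % 2 ^ a j = r j → False := by
    intro mm
    exact residues B _ a (fun i _ => haB i) (hf2 mm)
  choose r hr1 hr2 using hres
  set ρ : Fin n → ℕ := fun i => r (f i) i with hρdef
  have hρlt : ∀ i, ρ i < q i := by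
    intro i
    exact hr1 (f i) i (by simp)
  set S : ℕ → Finset (Fin n) :=
    fun t => Finset.univ.filter (fun i => t % 2 ^ a i = ρ i) with hSdef
  refine ⟨S, ?_, ?_⟩
  · -- cardinality
    intro t
    have h := Finset.card_le_card_of_injOn f
      (fun i (hi : i ∈ S t) => Finset.mem_range.mpr (hf1 i (mem_univ i)))
      (s := S t) (t := Finset.range c) ?_
    · simpa using h
    · intro i hi j hj hfij
      by_contra hij
      have hiS : t % 2 ^ a i = ρ i := by
        have := hi; rw [hSdef] at this; simp at this; exact this
      have hjS : t % 2 ^ a j = ρ j := by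
        have := hj; rw [hSdef] at this; simp at this; exact this
      refine hr2 (f i) i (by simp) j (by simp [hfij]) hij t hiS ?_
      rw [hρdef] at hjS
      simpa [hfij] using hjS
  · -- limsup bound
    have htau : ∀ (i : Fin n) (t : ℕ), ρ i < t →
        tauC n S i t ≤ (t - ρ i - 1) % q i + 1 := by
      intro i t ht
      set u := t - ρ i - 1 with hu
      have hqi := hq1 i
      have hdm : u % q i + q i * (u / q i) = u := Nat.mod_add_div u (q i)
      have hmle : u % q i ≤ u := Nat.mod_le _ _
      set t₀ := ρ i + q i * (u / q i) with ht₀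
      have hmem : t₀ ∈ (Finset.range t).filter (fun t' => i ∈ S t') := by
        rw [Finset.mem_filter, Finset.mem_range]
        refine ⟨by omega, ?_⟩
        rw [hSdef]
        simp only [Finset.mem_filter, Finset.mem_univ, true_and]
        show (ρ i + q i * (u / q i)) % 2 ^ a i = ρ i
        have hqa : (2:ℕ) ^ a i = q i := rfl
        rw [hqa, Nat.add_mul_mod_self_left]
        exact Nat.mod_eq_of_lt (hρlt i)
      have hsup := Finset.le_sup (f := id) hmem
      simp only [id] at hsup
      simp only [tauC]
      omega
    have hsum2 : ∀ (i : Fin n) (T : ℕ),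
        2 * ∑ t ∈ Finset.Icc 1 T, tauC n S i t ≤ T * (q i + 1) + 2 * (ρ i + 1) ^ 2 := by
      intro i T
      have hb : ∀ t ∈ Finset.Icc 1 T,
          tauC n S i t ≤ (t - ρ i - 1) % q i + 1 + (if t ≤ ρ i then t else 0) := by
        intro t htm
        rcases le_or_gt t (ρ i) with h | h
        · have h1 : tauC n S i t ≤ t := Nat.sub_le _ _
          simp only [if_pos h]
          omega
        · have := htau i t h
          simp only [if_neg (not_le.mpr h)]
          omega
      have h1 := Finset.sum_le_sum hb
      rw [Finset.sum_add_distrib, Finset.sum_add_distrib, Finset.sum_const] at h1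
      have hcard : (Finset.Icc 1 T).card = T := by rw [Nat.card_Icc]; omega
      have h2 : ∑ t ∈ Finset.Icc 1 T, (t - ρ i - 1) % q i
          = ∑ u ∈ Finset.range T, (u - ρ i) % q i := by
        rw [show Finset.Icc 1 T = Finset.Ico 1 (T+1) from by rw [Finset.Ico_add_one_right_eq_Icc],
          Finset.sum_Ico_eq_sum_range]
        apply Finset.sum_congr (by congr 1)
        intro u _
        congr 1
        omega
      have h3 := modsum' (q i) (hq1 i) (ρ i) T
      have h4 : ∑ t ∈ Finset.Icc 1 T, (if t ≤ ρ i then t else 0) ≤ ρ i * ρ i := by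
        calc ∑ t ∈ Finset.Icc 1 T, (if t ≤ ρ i then t else 0)
            ≤ ∑ t ∈ Finset.Icc 1 T, (if t ≤ ρ i then ρ i else 0) := by
              apply Finset.sum_le_sum; intro t _; split <;> omega
          _ = ((Finset.Icc 1 T).filter (fun t => t ≤ ρ i)).card * ρ i := by
              rw [Finset.sum_ite, Finset.sum_const, Finset.sum_const_zero, add_zero, smul_eq_mul]
          _ ≤ ρ i * ρ i := by
              apply Nat.mul_le_mul_right
              calc ((Finset.Icc 1 T).filter (fun t => t ≤ ρ i)).card
                  ≤ (Finset.Icc 1 (ρ i)).card := Finset.card_le_card (by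
                    intro x hx
                    simp only [Finset.mem_filter, Finset.mem_Icc] at hx ⊢
                    omega)
                _ = ρ i := by rw [Nat.card_Icc]; omega
      rw [h2, hcard] at h1
      simp only [smul_eq_mul, mul_one] at h1
      have e1 : T * (q i + 1) = T * (q i - 1) + T * 2 := by
        rw [← Nat.mul_add]; congr 1
        have := hq1 i; omega
      have e2 : (ρ i + 1) ^ 2 = ρ i * ρ i + 2 * ρ i + 1 := by ring
      linarith [h1, h3, h4, e1, e2]
    -- real-valued estimates
    set C : ℝ := ∑ i, π i * (((q i : ℕ) : ℝ) + 1) / 2 with hCdef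
    set D : ℝ := ∑ i, π i * (((ρ i + 1) ^ 2 : ℕ) : ℝ) with hDdef
    have hF : ∀ T : ℕ, 1 ≤ T →
        (1 / (T : ℝ)) * ∑ t ∈ Finset.Icc 1 T, ∑ i, π i * (tauC n S i t : ℝ)
          ≤ C + D * (1 / T) := by
      intro T hT
      have hT0 : (0:ℝ) < T := by exact_mod_cast hT
      rw [Finset.sum_comm]
      have hinner : ∀ i : Fin n, ∑ t ∈ Finset.Icc 1 T, π i * (tauC n S i t : ℝ)
          ≤ (T : ℝ) * (π i * (((q i : ℕ) : ℝ) + 1) / 2) + π i * (((ρ i + 1) ^ 2 : ℕ) : ℝ) := by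
        intro i
        rw [← Finset.mul_sum]
        have hN : ((∑ t ∈ Finset.Icc 1 T, tauC n S i t : ℕ) : ℝ)
            ≤ (T : ℝ) * ((((q i : ℕ) : ℝ) + 1) / 2) + (((ρ i + 1) ^ 2 : ℕ) : ℝ) := by
          have := hsum2 i T
          have hcast : ((2 * ∑ t ∈ Finset.Icc 1 T, tauC n S i t : ℕ) : ℝ)
              ≤ ((T * (q i + 1) + 2 * (ρ i + 1) ^ 2 : ℕ) : ℝ) := by exact_mod_cast this
          push_cast at hcast ⊢
          linarith
        rw [Nat.cast_sum] at hN
        calc π i * ∑ t ∈ Finset.Icc 1 T, (tauC n S i t : ℝ)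
            ≤ π i * ((T : ℝ) * ((((q i : ℕ) : ℝ) + 1) / 2) + (((ρ i + 1) ^ 2 : ℕ) : ℝ)) :=
              mul_le_mul_of_nonneg_left hN (hπ i).le
          _ = (T : ℝ) * (π i * (((q i : ℕ) : ℝ) + 1) / 2) + π i * (((ρ i + 1) ^ 2 : ℕ) : ℝ) := by
              ring
      calc (1 / (T : ℝ)) * ∑ i, ∑ t ∈ Finset.Icc 1 T, π i * (tauC n S i t : ℝ)
          ≤ (1 / (T : ℝ)) * ((T : ℝ) * C + D) := by
            apply mul_le_mul_of_nonneg_left _ (by positivity)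
            rw [hCdef, hDdef, Finset.mul_sum, ← Finset.sum_add_distrib]
            exact Finset.sum_le_sum (fun i _ => hinner i)
        _ = C + D * (1 / T) := by field_simp
    -- limsup computation
    have hCD : Filter.Tendsto (fun T : ℕ => C + D * (1 / (T : ℝ)))
        Filter.atTop (nhds C) := by
      have h0 := tendsto_one_div_atTop_nhds_zero_nat (𝕜 := ℝ)
      have := Filter.Tendsto.const_mul D h0
      simpa using Filter.Tendsto.const_add C this
    have hev : (fun t : ℕ => (1 / (t : ℝ)) * ∑ t' ∈ Finset.Icc 1 t, ∑ i, π i * (tauC n S i t' : ℝ))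
        ≤ᶠ[Filter.atTop] (fun T : ℕ => C + D * (1 / (T : ℝ))) :=
      Filter.eventually_atTop.mpr ⟨1, fun T hT => hF T hT⟩
    have hnn : ∀ᶠ T : ℕ in Filter.atTop,
        (0:ℝ) ≤ (1 / (T : ℝ)) * ∑ t' ∈ Finset.Icc 1 T, ∑ i, π i * (tauC n S i t' : ℝ) :=
      Filter.Eventually.of_forall (fun T => mul_nonneg (by positivity)
        (Finset.sum_nonneg (fun t _ => Finset.sum_nonneg
          (fun i _ => mul_nonneg (hπ i).le (Nat.cast_nonneg _)))))
    have hlim : Filter.limsup (fun t : ℕ =>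
        (1 / (t : ℝ)) * ∑ t' ∈ Finset.Icc 1 t, ∑ i, π i * (tauC n S i t' : ℝ))
        Filter.atTop ≤ C := by
      have h1 := Filter.limsup_le_limsup hev
        (Filter.isCoboundedUnder_le_of_eventually_le Filter.atTop hnn)
        (hCD.isBoundedUnder_le)
      rwa [hCD.limsup_eq] at h1
    -- final arithmetic
    set M : ℝ := max (∑ i, π i) ((1 / (2 * (c:ℝ))) * W ^ 2) with hMdef
    have hMnn : (0:ℝ) ≤ M :=
      le_trans (Finset.sum_nonneg (fun i _ => (hπ i).le)) (le_max_left _ _)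
    have hC3 : C ≤ 3 * M := by
      have step1 : C ≤ ∑ i, π i * ((m i : ℕ) : ℝ) := by
        apply Finset.sum_le_sum
        intro i _
        rw [div_le_iff₀ (by norm_num : (0:ℝ) < 2)]
        have h2m : ((q i : ℕ) : ℝ) + 1 ≤ 2 * ((m i : ℕ) : ℝ) := by exact_mod_cast hq2m i
        nlinarith [mul_le_mul_of_nonneg_left h2m (hπ i).le]
      have step2 : ∑ i, π i * ((m i : ℕ) : ℝ) ≤ ∑ i, π i * (p i + 1) := by
        apply Finset.sum_le_sum
        intro i _
        exact mul_le_mul_of_nonneg_left (Nat.ceil_lt_add_one (hppos i).le).le (hπ i).le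
      have step3 : ∑ i, π i * (p i + 1) = W ^ 2 / c + ∑ i, π i := by
        have e : ∀ i : Fin n, π i * (p i + 1) = Real.sqrt (π i) * (W / c) + π i := by
          intro i
          have hsq : (0:ℝ) < Real.sqrt (π i) := Real.sqrt_pos.mpr (hπ i)
          have hdiv : π i / Real.sqrt (π i) = Real.sqrt (π i) := Real.div_sqrt
          have e2 : π i * p i = Real.sqrt (π i) * (W / c) := by
            rw [hpdef]
            rw [show π i * (W / ((c:ℝ) * Real.sqrt (π i)))
                = (π i / Real.sqrt (π i)) * (W / c) from by
              field_simp]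
            rw [hdiv]
          calc π i * (p i + 1) = π i * p i + π i := by ring
            _ = Real.sqrt (π i) * (W / c) + π i := by rw [e2]
        rw [Finset.sum_congr rfl (fun i _ => e i), Finset.sum_add_distrib,
          ← Finset.sum_mul, ← hW]
        rw [show W * (W / c) = W ^ 2 / c from by ring]
      have hM1 : ∑ i, π i ≤ M := le_max_left _ _
      have hM2 : W ^ 2 / c ≤ 2 * M := by
        have he : W ^ 2 / (c:ℝ) = 2 * ((1 / (2 * (c:ℝ))) * W ^ 2) := by
          field_simp
        rw [he]
        have : (1 / (2 * (c:ℝ))) * W ^ 2 ≤ M := le_max_right _ _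
        linarith
      linarith [step1, step2, hM1, hM2, step3.le, step3.ge]
    refine le_trans hlim (le_trans hC3 ?_)
    apply mul_le_mul_of_nonneg_right _ hMnn
    have h1c : (0:ℝ) ≤ ((c:ℝ) - 1) / c := div_nonneg (by
      have : (1:ℝ) ≤ c := by exact_mod_cast hc
      linarith) hcR.le
    linarith
end

section
/- Let n ≥ 1, define π : Fin n → ℝ by π i = 2^{-(i+1)} for i = 0,…,n-1, set Z = ∑_{j=0}^{n-1} 2^{-(j+1)/2}, and define p : Fin n → ℝ by p i = 2^{-(i+1)/2} / Z. Then ∑_{i} (π i)/(p i) = Z², and Z² ≤ 6. -/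
theorem stmt_12 (n : ℕ) (hn : 1 ≤ n) (π p : Fin n → ℝ) (Z : ℝ)
    (hπ : ∀ i : Fin n, π i = ((1 : ℝ) / 2) ^ ((i : ℕ) + 1))
    (hZ : Z = ∑ j : Fin n, (2 : ℝ) ^ (-(((j : ℕ) : ℝ) + 1) / 2))
    (hp : ∀ i : Fin n, p i = (2 : ℝ) ^ (-(((i : ℕ) : ℝ) + 1) / 2) / Z) :
    (∑ i, π i / p i) = Z ^ 2 ∧ Z ^ 2 ≤ 6 := by
  set r : ℝ := (2 : ℝ) ^ (-(1 : ℝ)/2) with hrdef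
  have hr0 : 0 < r := Real.rpow_pos_of_pos (by norm_num) _
  have hr1 : r < 1 := Real.rpow_lt_one_of_one_lt_of_neg (by norm_num) (by norm_num)
  have hrj : ∀ j : ℕ, (2 : ℝ) ^ (-((j : ℝ) + 1) / 2) = r ^ (j + 1) := by
    intro j
    rw [hrdef, ← Real.rpow_natCast ((2:ℝ) ^ (-(1:ℝ)/2)) (j+1),
      ← Real.rpow_mul (by norm_num)]
    push_cast
    ring_nf
  have hr2 : r ^ 2 = 1 / 2 := by
    rw [hrdef, ← Real.rpow_natCast ((2:ℝ) ^ (-(1:ℝ)/2)) 2,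
      ← Real.rpow_mul (by norm_num)]
    norm_num
  have hZ' : Z = ∑ j : Fin n, r ^ ((j : ℕ) + 1) := by
    rw [hZ]; exact Finset.sum_congr rfl (fun j _ => hrj j)
  have hZpos : 0 < Z := by
    rw [hZ']
    apply Finset.sum_pos (fun j _ => pow_pos hr0 _)
    exact Finset.univ_nonempty_iff.mpr ⟨⟨0, hn⟩⟩
  have hsum : (∑ i, π i / p i) = Z ^ 2 := by
    have : ∀ i : Fin n, π i / p i = Z * r ^ ((i : ℕ) + 1) := by
      intro i
      rw [hπ, hp, hrj]
      have hrn : r ^ ((i : ℕ) + 1) ≠ 0 := pow_ne_zero _ (ne_of_gt hr0)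
      have h12 : ((1:ℝ)/2) ^ ((i : ℕ) + 1) = r ^ ((i : ℕ) + 1) * r ^ ((i : ℕ) + 1) := by
        rw [← pow_add, ← hr2]; ring_nf
      field_simp [h12]
      rw [← hr2]
      ring
    rw [Finset.sum_congr rfl (fun i _ => this i), ← Finset.mul_sum, ← hZ']
    ring
  refine ⟨hsum, ?_⟩
  -- bound Z ≤ r / (1 - r)
  have hgeom : Z = r * ∑ j ∈ Finset.range n, r ^ j := by
    rw [hZ', Finset.sum_fin_eq_sum_range]
    rw [Finset.mul_sum]
    apply Finset.sum_congr rfl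
    intro j hj
    rw [dif_pos (Finset.mem_range.mp hj)]
    ring
  have hgs : ∑ j ∈ Finset.range n, r ^ j ≤ 1 / (1 - r) := by
    rw [geom_sum_eq (ne_of_lt hr1)]
    have hflip : (r ^ n - 1) / (r - 1) = (1 - r ^ n) / (1 - r) := by
      rw [← neg_div_neg_eq]; ring_nf
    rw [hflip, div_le_div_iff₀ (by linarith : (0:ℝ) < 1 - r) (by linarith : (0:ℝ) < 1 - r)]
    nlinarith [pow_pos hr0 n]
  have hZle : Z * (1 - r) ≤ r := by
    rw [hgeom]
    have h1r : 0 < 1 - r := by linarith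
    calc r * (∑ j ∈ Finset.range n, r ^ j) * (1 - r)
        ≤ r * (1 / (1 - r)) * (1 - r) := by
          apply mul_le_mul_of_nonneg_right _ (le_of_lt h1r)
          exact mul_le_mul_of_nonneg_left hgs (le_of_lt hr0)
      _ = r := by field_simp
  have hrle : r ≤ 708 / 1000 := by nlinarith
  nlinarith [hZpos, hZle, hrle]
end
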